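/- Let X be an ω-category with X_n = A[I] free, and let u, u', u'', v, v', v'' be (n+1)-cells of X. Whenever the left-hand sides are defined: (1) u •_k (v' ∘_r v'') = (u •_k v') ∘_r v'' for k ≤ n; (2) (u' ∘_r u'') •_k v = (u' •_k v) ∘_r u'' for k < n. -/

import Mathlib

/-- A globular higher-categorical cell structure: cells of all dimensions,
with domain (`src`), codomain (`tgt`), identity (`ide`) and, for each `k`,
binary composition at level `k` (a total operation; the laws below are
conditioned on the definedness conditions). For `u` of dimension `0`, we set
`src u = tgt u = u`. -/
structure OmegaCat : Type 1 where
  cell : Type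
  dim : cell → ℕ
  src : cell → cell
  tgt : cell → cell
  ide : cell → cell
  comp : ℕ → cell → cell → cell

namespace OmegaCat

/-- The iterated domain `d^{(k)} u` of a cell `u` of dimension `≥ k`. -/
def srcAt (X : OmegaCat) (k : ℕ) (u : X.cell) : X.cell := X.src^[X.dim u - k] u

/-- The iterated codomain `c^{(k)} u` of a cell `u` of dimension `≥ k`. -/
def tgtAt (X : OmegaCat) (k : ℕ) (u : X.cell) : X.cell := X.tgt^[X.dim u - k] u

/-- The iterated identity `1^{(m)}_u` over a cell `u` of dimension `≤ m`. -/
def idePad (X : OmegaCat) (m : ℕ) (u : X.cell) : X.cell := X.ide^[m - X.dim u] u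

/-- Composability of two cells at level `k`: equal dimensions `> k` and
matching iterated domain/codomain at level `k`. -/
def Composable (X : OmegaCat) (k : ℕ) (u v : X.cell) : Prop :=
  X.dim u = X.dim v ∧ k < X.dim u ∧ X.srcAt k u = X.tgtAt k v

/-- Whiskering composition of cells of possibly different dimensions: the
lower-dimensional argument is padded with iterated identities. -/
def wcomp (X : OmegaCat) (k : ℕ) (u v : X.cell) : X.cell :=
  X.comp k (X.idePad (max (X.dim u) (X.dim v)) u)
           (X.idePad (max (X.dim u) (X.dim v)) v)

/-- Parallelism of two cells (any two 0-cells are parallel). -/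
def Par (X : OmegaCat) (a b : X.cell) : Prop :=
  X.dim a = X.dim b ∧ (X.dim a = 0 ∨ (X.src a = X.src b ∧ X.tgt a = X.tgt b))

end OmegaCat

/-- The laws of a strict ω-category: globularity, behaviour of dimensions,
domains and codomains under the operations, associativity, exchange and
identity laws for the compositions. -/
structure OmegaCat.Laws (X : OmegaCat) : Prop where
  src_dim0 : ∀ u, X.dim u = 0 → X.src u = u ∧ X.tgt u = u
  dim_src : ∀ u, 0 < X.dim u → X.dim (X.src u) = X.dim u - 1
  dim_tgt : ∀ u, 0 < X.dim u → X.dim (X.tgt u) = X.dim u - 1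
  src_src : ∀ u, 1 < X.dim u → X.src (X.src u) = X.src (X.tgt u)
  tgt_src : ∀ u, 1 < X.dim u → X.tgt (X.src u) = X.tgt (X.tgt u)
  dim_ide : ∀ u, X.dim (X.ide u) = X.dim u + 1
  src_ide : ∀ u, X.src (X.ide u) = u
  tgt_ide : ∀ u, X.tgt (X.ide u) = u
  dim_comp : ∀ k u v, X.Composable k u v → X.dim (X.comp k u v) = X.dim u
  bd_comp_top : ∀ k u v, X.Composable k u v → k + 1 = X.dim u →
    X.src (X.comp k u v) = X.src v ∧ X.tgt (X.comp k u v) = X.tgt u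
  bd_comp : ∀ k u v, X.Composable k u v → k + 1 < X.dim u →
    X.src (X.comp k u v) = X.comp k (X.src u) (X.src v) ∧
    X.tgt (X.comp k u v) = X.comp k (X.tgt u) (X.tgt v)
  comp_assoc : ∀ k u v w, X.Composable k u v → X.Composable k v w →
    X.comp k (X.comp k u v) w = X.comp k u (X.comp k v w)
  exch : ∀ l k t t₁ s s₁, l < k →
    X.Composable k t t₁ → X.Composable k s s₁ →
    X.Composable l (X.comp k t t₁) (X.comp k s s₁) →
    X.comp l (X.comp k t t₁) (X.comp k s s₁) =
      X.comp k (X.comp l t s) (X.comp l t₁ s₁)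
  comp_id_left : ∀ k u, k < X.dim u →
    X.comp k (X.idePad (X.dim u) (X.tgtAt k u)) u = u
  comp_id_right : ∀ k u, k < X.dim u →
    X.comp k u (X.idePad (X.dim u) (X.srcAt k u)) = u
  ide_comp : ∀ k u v, X.Composable k u v →
    X.ide (X.comp k u v) = X.comp k (X.ide u) (X.ide v)

/-- `F` is (the function underlying) an ω-functor from `X` to `Z`. -/
def IsOmegaFn (X Z : OmegaCat) (F : X.cell → Z.cell) : Prop :=
  (∀ u, Z.dim (F u) = X.dim u) ∧
  (∀ u, 0 < X.dim u → Z.src (F u) = F (X.src u) ∧ Z.tgt (F u) = F (X.tgt u)) ∧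
  (∀ u, F (X.ide u) = Z.ide (F u)) ∧
  (∀ k u v, X.Composable k u v →
    Z.Composable k (F u) (F v) ∧ F (X.comp k u v) = Z.comp k (F u) (F v))

/-- `X` is an `n`-category: every cell of dimension `> n` is an identity. -/
def IsNCat (X : OmegaCat) (n : ℕ) : Prop :=
  ∀ u, n < X.dim u → ∃ v, u = X.ide v

/-- `Z` extends `X` at level `m` via `e`, i.e. `e` identifies the `m`-th
truncation of `X` with that of `Z`. -/
def ExtendsAt (Z X : OmegaCat) (m : ℕ) (e : X.cell → Z.cell) : Prop :=
  (∀ a b, X.dim a ≤ m → X.dim b ≤ m → e a = e b → a = b) ∧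
  (∀ u, Z.dim u ≤ m → ∃ a, X.dim a ≤ m ∧ e a = u) ∧
  (∀ a, X.dim a ≤ m → Z.dim (e a) = X.dim a) ∧
  (∀ a, 0 < X.dim a → X.dim a ≤ m →
    Z.src (e a) = e (X.src a) ∧ Z.tgt (e a) = e (X.tgt a)) ∧
  (∀ a, X.dim a < m → Z.ide (e a) = e (X.ide a)) ∧
  (∀ k a b, X.Composable k a b → X.dim a ≤ m →
    Z.comp k (e a) (e b) = e (X.comp k a b))

/-- The `n`-th truncation of `X` is the free extension of its `(n−1)`-th
truncation generated by the set `I` of `n`-indeterminates: every assignment of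
`I` into an ω-category `Z` extending the `(n−1)`-truncation of `X`, respecting
domains and codomains, extends uniquely to the `n`-truncation of `X`. -/
def FreeAtLevel (X : OmegaCat) (n : ℕ) (I : Set X.cell) : Prop :=
  (∀ x ∈ I, X.dim x = n) ∧
  ∀ (Z : OmegaCat), Z.Laws → ∀ (e : X.cell → Z.cell), ExtendsAt Z X (n-1) e →
    ∀ (φ : X.cell → Z.cell),
      (∀ x ∈ I, Z.dim (φ x) = n ∧ Z.src (φ x) = e (X.src x) ∧
        Z.tgt (φ x) = e (X.tgt x)) →
      ∃ G : X.cell → Z.cell,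
        ((∀ u, X.dim u ≤ n - 1 → G u = e u) ∧ (∀ x ∈ I, G x = φ x) ∧
         (∀ u, X.dim u ≤ n → Z.dim (G u) = X.dim u) ∧
         (∀ u, 0 < X.dim u → X.dim u ≤ n →
           Z.src (G u) = G (X.src u) ∧ Z.tgt (G u) = G (X.tgt u)) ∧
         (∀ k u v, X.Composable k u v → X.dim u ≤ n →
           G (X.comp k u v) = Z.comp k (G u) (G v)) ∧
         (∀ u, X.dim u < n → G (X.ide u) = Z.ide (G u))) ∧
        ∀ G' : X.cell → Z.cell,
          ((∀ u, X.dim u ≤ n - 1 → G' u = e u) ∧ (∀ x ∈ I, G' x = φ x) ∧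
           (∀ u, X.dim u ≤ n → Z.dim (G' u) = X.dim u) ∧
           (∀ u, 0 < X.dim u → X.dim u ≤ n →
             Z.src (G' u) = G' (X.src u) ∧ Z.tgt (G' u) = G' (X.tgt u)) ∧
           (∀ k u v, X.Composable k u v → X.dim u ≤ n →
             G' (X.comp k u v) = Z.comp k (G' u) (G' v)) ∧
           (∀ u, X.dim u < n → G' (X.ide u) = Z.ide (G' u))) →
          ∀ u, X.dim u ≤ n → G' u = G u
/-- Occurrence data for the `n`-cells of `X` (whose `n`-truncation is freely
generated by the `n`-indeterminates `I`): each `n`-cell `u` has a finite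
indexed set of occurrences of indeterminates, with
`⟦u •_k v⟧ = ⟦u⟧ ⊔ ⟦v⟧`, one occurrence in each indeterminate and none in
identity cells. -/
structure CellOcc (X : OmegaCat) (n : ℕ) (I : Set X.cell) where
  oI : X.cell → Finset ℕ
  oF : X.cell → ℕ → X.cell
  occ_mem : ∀ u r, r ∈ oI u → oF u r ∈ I
  occ_ind : ∀ x ∈ I, ∃ r, oI x = {r} ∧ oF x r = x
  occ_ide : ∀ u, X.dim u = n - 1 → oI (X.ide u) = ∅
  occ_comp : ∀ k u v, k < n → X.dim u = n → X.Composable k u v →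
    Disjoint (oI u) (oI v) ∧ oI (X.comp k u v) = oI u ∪ oI v ∧
    (∀ i ∈ oI u, oF (X.comp k u v) i = oF u i) ∧
    (∀ i ∈ oI v, oF (X.comp k u v) i = oF v i)

/-- Definedness of the generalized whiskering `u ▫_r v`: `u` is an `n`-cell,
`r` indexes an occurrence of the indeterminate `x = ⟨u⟩(r)` in `u`, and `v` is
a cell of dimension `≥ n` with `d^{(n−1)} v = d x` and `c^{(n−1)} v = c x`. -/
def WDef (X : OmegaCat) (n : ℕ) {I : Set X.cell} (D : CellOcc X n I)
    (u : X.cell) (r : ℕ) (v : X.cell) : Prop :=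
  X.dim u = n ∧ r ∈ D.oI u ∧ n ≤ X.dim v ∧
  X.srcAt (n-1) v = X.src (D.oF u r) ∧ X.tgtAt (n-1) v = X.tgt (D.oF u r)

/-- The characterizing conditions for the system of generalized whiskering
(replacement) operations `▫` on the `n`-cells of `X`. -/
def IsWhisk (X : OmegaCat) (n : ℕ) {I : Set X.cell} (D : CellOcc X n I)
    (rep : X.cell → ℕ → X.cell → X.cell) : Prop :=
  (∀ u r v, WDef X n D u r v →
      X.dim (rep u r v) = X.dim v ∧
      X.srcAt (n-1) (rep u r v) = X.src u ∧
      X.tgtAt (n-1) (rep u r v) = X.tgt u) ∧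
  (∀ x r v, x ∈ I → D.oI x = {r} → WDef X n D x r v → rep x r v = v) ∧
  (∀ k u u' r v, k < n → X.dim u = n → X.Composable k u u' →
     WDef X n D (X.comp k u u') r v →
     (r ∈ D.oI u → rep (X.comp k u u') r v = X.wcomp k (rep u r v) u') ∧
     (r ∈ D.oI u' → rep (X.comp k u u') r v = X.wcomp k u (rep u' r v)))

/-- Placed composition: `u ∘_r v = u •_n (du ▫_r v)`. -/
def pcomp (X : OmegaCat) (n : ℕ) (rep : X.cell → ℕ → X.cell → X.cell)
    (u : X.cell) (r : ℕ) (v : X.cell) : X.cell :=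
  X.comp n u (rep (X.src u) r v)

/-- Definedness of the placed composition of `(n+1)`-cells `u ∘_r v`:
`r` indexes an occurrence of an indeterminate `x` in `du` and `cv = x`. -/
def PDef (X : OmegaCat) (n : ℕ) {I : Set X.cell} (D : CellOcc X n I)
    (u : X.cell) (r : ℕ) (v : X.cell) : Prop :=
  X.dim u = n + 1 ∧ X.dim v = n + 1 ∧ r ∈ D.oI (X.src u) ∧
    X.tgt v = D.oF (X.src u) r

namespace StmtAux

open OmegaCat

lemma iter_split {α : Type} (f : α → α) {a b c : ℕ} (u : α) (h : a = b + c) :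
    f^[a] u = f^[b] (f^[c] u) := by subst h; rw [Function.iterate_add_apply]

variable {X : OmegaCat}

lemma dimSrcIter (hX : X.Laws) : ∀ m (u : X.cell), m ≤ X.dim u →
    X.dim (X.src^[m] u) = X.dim u - m := by
  intro m
  induction m with
  | zero => simp
  | succ m ih =>
    intro u h
    rw [Function.iterate_succ_apply,
      ih (X.src u) (by rw [hX.dim_src u (by omega)]; omega),
      hX.dim_src u (by omega)]
    omega

lemma dimTgtIter (hX : X.Laws) : ∀ m (u : X.cell), m ≤ X.dim u →
    X.dim (X.tgt^[m] u) = X.dim u - m := by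
  intro m
  induction m with
  | zero => simp
  | succ m ih =>
    intro u h
    rw [Function.iterate_succ_apply,
      ih (X.tgt u) (by rw [hX.dim_tgt u (by omega)]; omega),
      hX.dim_tgt u (by omega)]
    omega

lemma tgtSrcIter (hX : X.Laws) : ∀ j (u : X.cell) m, 1 ≤ m → m + j ≤ X.dim u →
    X.tgt^[m] (X.src^[j] u) = X.tgt^[m+j] u := by
  intro j
  induction j with
  | zero => simp
  | succ j ih =>
    intro u m hm h
    rw [Function.iterate_succ_apply, ih (X.src u) m hm (by rw [hX.dim_src u (by omega)]; omega)]
    calc X.tgt^[m+j] (X.src u) = X.tgt^[m+j-1] (X.tgt^[1] (X.src u)) := iter_split _ _ (by omega)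
      _ = X.tgt^[m+j-1] (X.tgt (X.src u)) := by rw [Function.iterate_one]
      _ = X.tgt^[m+j-1] (X.tgt (X.tgt u)) := by rw [hX.tgt_src u (by omega)]
      _ = X.tgt^[m+j-1] (X.tgt^[1] (X.tgt u)) := by rw [Function.iterate_one]
      _ = X.tgt^[m+j] (X.tgt u) := (iter_split _ _ (by omega)).symm
      _ = X.tgt^[m+j] (X.tgt^[1] u) := by rw [Function.iterate_one]
      _ = X.tgt^[m+(j+1)] u := (iter_split _ _ (by omega)).symm

lemma srcTgtIter (hX : X.Laws) : ∀ j (u : X.cell) m, 1 ≤ m → m + j ≤ X.dim u →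
    X.src^[m] (X.tgt^[j] u) = X.src^[m+j] u := by
  intro j
  induction j with
  | zero => simp
  | succ j ih =>
    intro u m hm h
    rw [Function.iterate_succ_apply, ih (X.tgt u) m hm (by rw [hX.dim_tgt u (by omega)]; omega)]
    calc X.src^[m+j] (X.tgt u) = X.src^[m+j-1] (X.src^[1] (X.tgt u)) := iter_split _ _ (by omega)
      _ = X.src^[m+j-1] (X.src (X.tgt u)) := by rw [Function.iterate_one]
      _ = X.src^[m+j-1] (X.src (X.src u)) := by rw [← hX.src_src u (by omega)]
      _ = X.src^[m+j-1] (X.src^[1] (X.src u)) := by rw [Function.iterate_one]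
      _ = X.src^[m+j] (X.src u) := (iter_split _ _ (by omega)).symm
      _ = X.src^[m+j] (X.src^[1] u) := by rw [Function.iterate_one]
      _ = X.src^[m+(j+1)] u := (iter_split _ _ (by omega)).symm

lemma dimIdeIter (hX : X.Laws) : ∀ m (u : X.cell), X.dim (X.ide^[m] u) = X.dim u + m := by
  intro m
  induction m with
  | zero => simp
  | succ m ih =>
    intro u
    rw [Function.iterate_succ_apply', hX.dim_ide, ih]
    omega

lemma srcIdeIter (hX : X.Laws) : ∀ m (u : X.cell), X.src^[m] (X.ide^[m] u) = u := by
  intro m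
  induction m with
  | zero => simp
  | succ m ih =>
    intro u
    rw [Function.iterate_succ_apply' (X.ide), Function.iterate_succ_apply (X.src),
      hX.src_ide, ih]

lemma tgtIdeIter (hX : X.Laws) : ∀ m (u : X.cell), X.tgt^[m] (X.ide^[m] u) = u := by
  intro m
  induction m with
  | zero => simp
  | succ m ih =>
    intro u
    rw [Function.iterate_succ_apply' (X.ide), Function.iterate_succ_apply (X.tgt),
      hX.tgt_ide, ih]

end StmtAux
namespace StmtAux

variable {X : OmegaCat}

lemma srcAt_def (k : ℕ) (u : X.cell) : X.srcAt k u = X.src^[X.dim u - k] u := rfl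
lemma tgtAt_def (k : ℕ) (u : X.cell) : X.tgtAt k u = X.tgt^[X.dim u - k] u := rfl
lemma idePad_def (m : ℕ) (u : X.cell) : X.idePad m u = X.ide^[m - X.dim u] u := rfl

lemma dim_srcAt (hX : X.Laws) {k : ℕ} {u : X.cell} (h : k ≤ X.dim u) :
    X.dim (X.srcAt k u) = k := by
  rw [srcAt_def, dimSrcIter hX _ _ (by omega)]; omega

lemma dim_tgtAt (hX : X.Laws) {k : ℕ} {u : X.cell} (h : k ≤ X.dim u) :
    X.dim (X.tgtAt k u) = k := by
  rw [tgtAt_def, dimTgtIter hX _ _ (by omega)]; omega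

lemma dim_idePad (hX : X.Laws) {m : ℕ} {u : X.cell} (h : X.dim u ≤ m) :
    X.dim (X.idePad m u) = m := by
  rw [idePad_def, dimIdeIter hX]; omega

lemma srcAt_down (hX : X.Laws) {l k : ℕ} {u : X.cell} (h : l ≤ k) (hk : k ≤ X.dim u) :
    X.srcAt l u = X.src^[k-l] (X.srcAt k u) := by
  rw [srcAt_def, srcAt_def]
  exact iter_split _ _ (by omega)

lemma tgtAt_down (hX : X.Laws) {l k : ℕ} {u : X.cell} (h : l ≤ k) (hk : k ≤ X.dim u) :
    X.tgtAt l u = X.tgt^[k-l] (X.tgtAt k u) := by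
  rw [tgtAt_def, tgtAt_def]
  exact iter_split _ _ (by omega)

lemma srcAt_tgtAt (hX : X.Laws) {l k : ℕ} {u : X.cell} (h : l < k) (hk : k ≤ X.dim u) :
    X.srcAt l (X.tgtAt k u) = X.srcAt l u := by
  have hdt : X.dim (X.tgtAt k u) = k := dim_tgtAt hX (by omega)
  rw [srcAt_def, hdt, tgtAt_def, srcTgtIter hX _ _ _ (by omega) (by omega), srcAt_def]
  congr 1
  omega

lemma tgtAt_srcAt (hX : X.Laws) {l k : ℕ} {u : X.cell} (h : l < k) (hk : k ≤ X.dim u) :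
    X.tgtAt l (X.srcAt k u) = X.tgtAt l u := by
  have hds : X.dim (X.srcAt k u) = k := dim_srcAt hX (by omega)
  rw [tgtAt_def, hds, srcAt_def, tgtSrcIter hX _ _ _ (by omega) (by omega), tgtAt_def]
  congr 1
  omega

lemma srcAt_srcAt (hX : X.Laws) {l k : ℕ} {u : X.cell} (h : l ≤ k) (hk : k ≤ X.dim u) :
    X.srcAt l (X.srcAt k u) = X.srcAt l u := by
  rw [srcAt_def l (X.srcAt k u), dim_srcAt hX (u := u) (by omega),
    srcAt_def k u, ← Function.iterate_add_apply, srcAt_def]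
  congr 1
  omega

lemma tgtAt_tgtAt (hX : X.Laws) {l k : ℕ} {u : X.cell} (h : l ≤ k) (hk : k ≤ X.dim u) :
    X.tgtAt l (X.tgtAt k u) = X.tgtAt l u := by
  rw [tgtAt_def l (X.tgtAt k u), dim_tgtAt hX (u := u) (by omega),
    tgtAt_def k u, ← Function.iterate_add_apply, tgtAt_def]
  congr 1
  omega

lemma composable_src (hX : X.Laws) {k : ℕ} {u v : X.cell}
    (h : X.Composable k u v) (hk : k+1 < X.dim u) :
    X.Composable k (X.src u) (X.src v) := by
  obtain ⟨hd, hk', hb⟩ := h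
  have h1 : X.dim (X.src u) = X.dim u - 1 := hX.dim_src u (by omega)
  have h2 : X.dim (X.src v) = X.dim v - 1 := hX.dim_src v (by omega)
  refine ⟨by omega, by omega, ?_⟩
  rw [srcAt_def, tgtAt_def, h1, h2]
  calc X.src^[X.dim u - 1 - k] (X.src u)
      = X.src^[X.dim u - 1 - k] (X.src^[1] u) := by rw [Function.iterate_one]
    _ = X.src^[X.dim u - k] u := by
        rw [← iter_split X.src u (by omega : X.dim u - k = (X.dim u - 1 - k) + 1)]
    _ = X.tgt^[X.dim v - k] v := hb
    _ = X.tgt^[(X.dim v - 1 - k) + 1] v := by congr 1; omega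
    _ = X.tgt^[X.dim v - 1 - k] (X.src^[1] v) :=
        (tgtSrcIter hX 1 v (X.dim v - 1 - k) (by omega) (by omega)).symm
    _ = X.tgt^[X.dim v - 1 - k] (X.src v) := by rw [Function.iterate_one]

lemma composable_tgt (hX : X.Laws) {k : ℕ} {u v : X.cell}
    (h : X.Composable k u v) (hk : k+1 < X.dim u) :
    X.Composable k (X.tgt u) (X.tgt v) := by
  obtain ⟨hd, hk', hb⟩ := h
  have h1 : X.dim (X.tgt u) = X.dim u - 1 := hX.dim_tgt u (by omega)
  have h2 : X.dim (X.tgt v) = X.dim v - 1 := hX.dim_tgt v (by omega)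
  refine ⟨by omega, by omega, ?_⟩
  rw [srcAt_def, tgtAt_def, h1, h2]
  calc X.src^[X.dim u - 1 - k] (X.tgt u)
      = X.src^[X.dim u - 1 - k] (X.tgt^[1] u) := by rw [Function.iterate_one]
    _ = X.src^[X.dim u - k] u := by
        rw [srcTgtIter hX 1 u (X.dim u - 1 - k) (by omega) (by omega)]
        congr 1
        omega
    _ = X.tgt^[X.dim v - k] v := hb
    _ = X.tgt^[X.dim v - 1 - k] (X.tgt^[1] v) := iter_split _ _ (by omega)
    _ = X.tgt^[X.dim v - 1 - k] (X.tgt v) := by rw [Function.iterate_one]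

end StmtAux
namespace StmtAux

variable {X : OmegaCat}

lemma comp_bdAt (hX : X.Laws) : ∀ m {k} {u v : X.cell}, X.dim u - (k+1) = m →
    X.Composable k u v →
    X.srcAt k (X.comp k u v) = X.srcAt k v ∧ X.tgtAt k (X.comp k u v) = X.tgtAt k u := by
  intro m
  induction m with
  | zero =>
    intro k u v hm h
    have hd := hX.dim_comp k u v h
    obtain ⟨hdv, hk, hb⟩ := h
    have hdk : X.dim u = k + 1 := by omega
    obtain ⟨hs, ht⟩ := hX.bd_comp_top k u v ⟨hdv, hk, hb⟩ hdk.symm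
    constructor
    · have e1 : X.srcAt k (X.comp k u v) = X.src (X.comp k u v) := by
        rw [srcAt_def, hd, hdk, show k+1-k = 1 from by omega, Function.iterate_one]
      have e2 : X.srcAt k v = X.src v := by
        rw [srcAt_def, ← hdv, hdk, show k+1-k = 1 from by omega, Function.iterate_one]
      rw [e1, e2, hs]
    · have e1 : X.tgtAt k (X.comp k u v) = X.tgt (X.comp k u v) := by
        rw [tgtAt_def, hd, hdk, show k+1-k = 1 from by omega, Function.iterate_one]
      have e2 : X.tgtAt k u = X.tgt u := by
        rw [tgtAt_def, hdk, show k+1-k = 1 from by omega, Function.iterate_one]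
      rw [e1, e2, ht]
  | succ m ih =>
    intro k u v hm h
    have hd := hX.dim_comp k u v h
    obtain ⟨hdv, hk, hb⟩ := h
    have hlt : k + 1 < X.dim u := by omega
    obtain ⟨hs, ht⟩ := hX.bd_comp k u v ⟨hdv, hk, hb⟩ hlt
    have hcs := composable_src hX ⟨hdv, hk, hb⟩ hlt
    have hct := composable_tgt hX ⟨hdv, hk, hb⟩ hlt
    have hdsu : X.dim (X.src u) = X.dim u - 1 := hX.dim_src u (by omega)
    have hdtu : X.dim (X.tgt u) = X.dim u - 1 := hX.dim_tgt u (by omega)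
    have ihs := ih (k := k) (u := X.src u) (v := X.src v) (by omega) hcs
    have iht := ih (k := k) (u := X.tgt u) (v := X.tgt v) (by omega) hct
    constructor
    · rw [srcAt_def, hd, iter_split X.src _ (by omega : X.dim u - k = (X.dim u - 1 - k) + 1),
        Function.iterate_one, hs]
      have e3 : X.src^[X.dim u - 1 - k] (X.comp k (X.src u) (X.src v)) =
          X.srcAt k (X.comp k (X.src u) (X.src v)) := by
        rw [srcAt_def, hX.dim_comp _ _ _ hcs, hdsu]
      rw [e3, ihs.1, srcAt_def, hX.dim_src v (by omega), srcAt_def,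
        show X.dim v - k = (X.dim v - 1 - k) + 1 from by omega,
        Function.iterate_succ_apply]
    · rw [tgtAt_def, hd, iter_split X.tgt _ (by omega : X.dim u - k = (X.dim u - 1 - k) + 1),
        Function.iterate_one, ht]
      have e3 : X.tgt^[X.dim u - 1 - k] (X.comp k (X.tgt u) (X.tgt v)) =
          X.tgtAt k (X.comp k (X.tgt u) (X.tgt v)) := by
        rw [tgtAt_def, hX.dim_comp _ _ _ hct, hdtu]
      rw [e3, iht.2, tgtAt_def, hdtu, tgtAt_def,
        show X.dim u - k = (X.dim u - 1 - k) + 1 from by omega,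
        Function.iterate_succ_apply]

lemma srcAt_comp_le (hX : X.Laws) {l k : ℕ} {u v : X.cell} (h : X.Composable k u v)
    (hl : l ≤ k) : X.srcAt l (X.comp k u v) = X.srcAt l v := by
  have hk : k < X.dim u := h.2.1
  have hdv : X.dim u = X.dim v := h.1
  have hdc : X.dim (X.comp k u v) = X.dim u := hX.dim_comp k u v h
  rw [← srcAt_srcAt hX hl (u := X.comp k u v) (by omega), (comp_bdAt hX _ rfl h).1,
    srcAt_srcAt hX hl (by omega : k ≤ X.dim v)]

lemma tgtAt_comp_le (hX : X.Laws) {l k : ℕ} {u v : X.cell} (h : X.Composable k u v)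
    (hl : l ≤ k) : X.tgtAt l (X.comp k u v) = X.tgtAt l u := by
  have hk : k < X.dim u := h.2.1
  have hdc : X.dim (X.comp k u v) = X.dim u := hX.dim_comp k u v h
  rw [← tgtAt_tgtAt hX hl (u := X.comp k u v) (by omega), (comp_bdAt hX _ rfl h).2,
    tgtAt_tgtAt hX hl (by omega : k ≤ X.dim u)]

lemma srcAt_eq_of_composable (hX : X.Laws) {l k : ℕ} {u v : X.cell}
    (h : X.Composable k u v) (hl : l < k) : X.srcAt l u = X.srcAt l v := by
  obtain ⟨hd, hk, hb⟩ := h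
  rw [← srcAt_srcAt hX (le_of_lt hl) (by omega : k ≤ X.dim u), hb,
    srcAt_tgtAt hX hl (by omega : k ≤ X.dim v)]

lemma tgtAt_eq_of_composable (hX : X.Laws) {l k : ℕ} {u v : X.cell}
    (h : X.Composable k u v) (hl : l < k) : X.tgtAt l u = X.tgtAt l v := by
  obtain ⟨hd, hk, hb⟩ := h
  rw [← tgtAt_srcAt hX hl (by omega : k ≤ X.dim u), hb,
    tgtAt_tgtAt hX (le_of_lt hl) (by omega : k ≤ X.dim v)]

lemma bdSrcIter (hX : X.Laws) : ∀ m {l} {u v : X.cell}, X.Composable l u v →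
    m + l + 1 ≤ X.dim u →
    X.src^[m] (X.comp l u v) = X.comp l (X.src^[m] u) (X.src^[m] v) ∧
    X.Composable l (X.src^[m] u) (X.src^[m] v) := by
  intro m
  induction m with
  | zero => intro l u v h _; exact ⟨rfl, h⟩
  | succ m ih =>
    intro l u v h hm
    obtain ⟨he, hc⟩ := ih h (by omega)
    have hdm : X.dim (X.src^[m] u) = X.dim u - m := dimSrcIter hX m u (by omega)
    have hlt : l + 1 < X.dim (X.src^[m] u) := by omega
    obtain ⟨hs, _⟩ := hX.bd_comp l _ _ hc hlt
    constructor
    · rw [Function.iterate_succ_apply' X.src, he, hs,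
        ← Function.iterate_succ_apply' X.src, ← Function.iterate_succ_apply' X.src]
    · have := composable_src hX hc hlt
      rwa [← Function.iterate_succ_apply' X.src, ← Function.iterate_succ_apply' X.src] at this

lemma bdTgtIter (hX : X.Laws) : ∀ m {l} {u v : X.cell}, X.Composable l u v →
    m + l + 1 ≤ X.dim u →
    X.tgt^[m] (X.comp l u v) = X.comp l (X.tgt^[m] u) (X.tgt^[m] v) ∧
    X.Composable l (X.tgt^[m] u) (X.tgt^[m] v) := by
  intro m
  induction m with
  | zero => intro l u v h _; exact ⟨rfl, h⟩
  | succ m ih =>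
    intro l u v h hm
    obtain ⟨he, hc⟩ := ih h (by omega)
    have hdm : X.dim (X.tgt^[m] u) = X.dim u - m := dimTgtIter hX m u (by omega)
    have hlt : l + 1 < X.dim (X.tgt^[m] u) := by omega
    obtain ⟨_, hs⟩ := hX.bd_comp l _ _ hc hlt
    constructor
    · rw [Function.iterate_succ_apply' X.tgt, he, hs,
        ← Function.iterate_succ_apply' X.tgt, ← Function.iterate_succ_apply' X.tgt]
    · have := composable_tgt hX hc hlt
      rwa [← Function.iterate_succ_apply' X.tgt, ← Function.iterate_succ_apply' X.tgt] at this

lemma composable_ide (hX : X.Laws) {k : ℕ} {u v : X.cell} (h : X.Composable k u v) :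
    X.Composable k (X.ide u) (X.ide v) := by
  obtain ⟨hd, hk, hb⟩ := h
  refine ⟨by rw [hX.dim_ide, hX.dim_ide, hd], by rw [hX.dim_ide]; omega, ?_⟩
  rw [srcAt_def, tgtAt_def, hX.dim_ide, hX.dim_ide,
    show X.dim u + 1 - k = (X.dim u - k) + 1 from by omega,
    show X.dim v + 1 - k = (X.dim v - k) + 1 from by omega,
    Function.iterate_succ_apply, Function.iterate_succ_apply, hX.src_ide, hX.tgt_ide]
  exact hb

lemma composable_idePad_left (hX : X.Laws) {k : ℕ} {u : X.cell} (hk : k < X.dim u) :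
    X.Composable k (X.idePad (X.dim u) (X.tgtAt k u)) u := by
  have hdt : X.dim (X.tgtAt k u) = k := dim_tgtAt hX (by omega)
  have hdi : X.dim (X.idePad (X.dim u) (X.tgtAt k u)) = X.dim u :=
    dim_idePad hX (by rw [hdt]; omega)
  refine ⟨hdi, by omega, ?_⟩
  rw [srcAt_def, hdi, idePad_def, hdt, srcIdeIter hX, tgtAt_def]

lemma composable_idePad_right (hX : X.Laws) {k : ℕ} {u : X.cell} (hk : k < X.dim u) :
    X.Composable k u (X.idePad (X.dim u) (X.srcAt k u)) := by
  have hds : X.dim (X.srcAt k u) = k := dim_srcAt hX (by omega)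
  have hdi : X.dim (X.idePad (X.dim u) (X.srcAt k u)) = X.dim u :=
    dim_idePad hX (by rw [hds]; omega)
  refine ⟨hdi.symm, by omega, ?_⟩
  rw [tgtAt_def, hdi, idePad_def, hds, tgtIdeIter hX, srcAt_def]

lemma composable_compL (hX : X.Laws) {k : ℕ} {u v w : X.cell}
    (huv : X.Composable k u v) (hvw : X.Composable k v w) :
    X.Composable k (X.comp k u v) w := by
  have hd := hX.dim_comp k u v huv
  refine ⟨by rw [hd, huv.1, hvw.1], by have := huv.2.1; omega, ?_⟩
  rw [(comp_bdAt hX _ rfl huv).1]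
  exact hvw.2.2

lemma composable_compR (hX : X.Laws) {k : ℕ} {u v w : X.cell}
    (huv : X.Composable k u v) (hvw : X.Composable k v w) :
    X.Composable k u (X.comp k v w) := by
  have hd := hX.dim_comp k v w hvw
  refine ⟨by rw [hd, huv.1], by have := huv.2.1; omega, ?_⟩
  rw [(comp_bdAt hX _ rfl hvw).2]
  exact huv.2.2

lemma composable_low (hX : X.Laws) {l k : ℕ} {t t₁ s s₁ : X.cell} (hlk : l < k)
    (ht : X.Composable k t t₁) (hs : X.Composable k s s₁)
    (hc : X.Composable l (X.comp k t t₁) (X.comp k s s₁)) :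
    X.Composable l t s ∧ X.Composable l t₁ s₁ := by
  have hdt := hX.dim_comp k t t₁ ht
  have hds := hX.dim_comp k s s₁ hs
  have hdim : X.dim t = X.dim s := by rw [← hdt, ← hds]; exact hc.1
  have hb : X.srcAt l t = X.tgtAt l s := by
    rw [srcAt_eq_of_composable hX ht hlk, ← srcAt_comp_le hX ht (le_of_lt hlk),
      hc.2.2, tgtAt_comp_le hX hs (le_of_lt hlk)]
  have hb1 : X.srcAt l t₁ = X.tgtAt l s₁ := by
    rw [← srcAt_eq_of_composable hX ht hlk, hb, tgtAt_eq_of_composable hX hs hlk]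
  have hlt : l < X.dim t := by have := hc.2.1; omega
  exact ⟨⟨hdim, hlt, hb⟩, ⟨by rw [← ht.1, ← hs.1, hdim], by rw [← ht.1]; exact hlt, hb1⟩⟩

end StmtAux
namespace StmtAux

variable {X : OmegaCat}

lemma srcAt_src (hX : X.Laws) {k : ℕ} {u : X.cell} (h : k < X.dim u) :
    X.srcAt k (X.src u) = X.srcAt k u := by
  have e : X.src u = X.srcAt (X.dim u - 1) u := by
    rw [srcAt_def, show X.dim u - (X.dim u - 1) = 1 from by omega, Function.iterate_one]
  rw [e, srcAt_srcAt hX (by omega) (by omega)]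

lemma tgtAt_tgt (hX : X.Laws) {k : ℕ} {u : X.cell} (h : k < X.dim u) :
    X.tgtAt k (X.tgt u) = X.tgtAt k u := by
  have e : X.tgt u = X.tgtAt (X.dim u - 1) u := by
    rw [tgtAt_def, show X.dim u - (X.dim u - 1) = 1 from by omega, Function.iterate_one]
  rw [e, tgtAt_tgtAt hX (by omega) (by omega)]

lemma srcAt_ide (hX : X.Laws) {k : ℕ} {u : X.cell} (h : k ≤ X.dim u) :
    X.srcAt k (X.ide u) = X.srcAt k u := by
  rw [srcAt_def, hX.dim_ide, show X.dim u + 1 - k = (X.dim u - k) + 1 from by omega,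
    Function.iterate_succ_apply, hX.src_ide, srcAt_def]

lemma tgtAt_ide (hX : X.Laws) {k : ℕ} {u : X.cell} (h : k ≤ X.dim u) :
    X.tgtAt k (X.ide u) = X.tgtAt k u := by
  rw [tgtAt_def, hX.dim_ide, show X.dim u + 1 - k = (X.dim u - k) + 1 from by omega,
    Function.iterate_succ_apply, hX.tgt_ide, tgtAt_def]

inductive Reach (X : OmegaCat) : X.cell → X.cell → Prop
  | refl (u : X.cell) : Reach X u u
  | src {u w : X.cell} : Reach X u w → Reach X u (X.src w)
  | tgt {u w : X.cell} : Reach X u w → Reach X u (X.tgt w)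

lemma Reach.trans {u v w : X.cell} (h1 : Reach X u v) (h2 : Reach X v w) :
    Reach X u w := by
  induction h2 with
  | refl => exact h1
  | src _ ih => exact Reach.src ih
  | tgt _ ih => exact Reach.tgt ih

lemma reach_dim (hX : X.Laws) {u w : X.cell} (h : Reach X u w) : X.dim w ≤ X.dim u := by
  induction h with
  | refl => exact le_refl _
  | src hr ih =>
    rcases Nat.eq_zero_or_pos (X.dim _) with h0 | h0
    · rw [(hX.src_dim0 _ h0).1]; omega
    · rw [hX.dim_src _ h0]; omega
  | tgt hr ih =>
    rcases Nat.eq_zero_or_pos (X.dim _) with h0 | h0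
    · rw [(hX.src_dim0 _ h0).2]; omega
    · rw [hX.dim_tgt _ h0]; omega

lemma reach_ide (hX : X.Laws) {u w : X.cell} (h : Reach X (X.ide u) w) :
    w = X.ide u ∨ Reach X u w := by
  induction h with
  | refl => exact Or.inl rfl
  | src hr ih =>
    rcases ih with rfl | h
    · rw [hX.src_ide]; exact Or.inr (Reach.refl u)
    · exact Or.inr (Reach.src h)
  | tgt hr ih =>
    rcases ih with rfl | h
    · rw [hX.tgt_ide]; exact Or.inr (Reach.refl u)
    · exact Or.inr (Reach.tgt h)

lemma reach_cases {u w : X.cell} (h : Reach X u w) :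
    w = u ∨ Reach X (X.src u) w ∨ Reach X (X.tgt u) w := by
  induction h with
  | refl => exact Or.inl rfl
  | src hr ih =>
    rcases ih with rfl | h | h
    · exact Or.inr (Or.inl (Reach.refl _))
    · exact Or.inr (Or.inl (Reach.src h))
    · exact Or.inr (Or.inr (Reach.src h))
  | tgt hr ih =>
    rcases ih with rfl | h | h
    · exact Or.inr (Or.inr (Reach.refl _))
    · exact Or.inr (Or.inl (Reach.tgt h))
    · exact Or.inr (Or.inr (Reach.tgt h))

lemma comp_reach (hX : X.Laws) {k : ℕ} {u v : X.cell} (h : X.Composable k u v) :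
    ∀ w, Reach X (X.comp k u v) w →
    Reach X u w ∨ Reach X v w ∨ ∃ u' v', Reach X u u' ∧ Reach X v v' ∧
      X.Composable k u' v' ∧ w = X.comp k u' v' := by
  intro w hw
  induction hw with
  | refl => exact Or.inr (Or.inr ⟨u, v, Reach.refl u, Reach.refl v, h, rfl⟩)
  | src hr ih =>
    rcases ih with h1 | h1 | ⟨u', v', ru, rv, hc, rfl⟩
    · exact Or.inl (Reach.src h1)
    · exact Or.inr (Or.inl (Reach.src h1))
    · by_cases hlt : k + 1 < X.dim u'
      · obtain ⟨hs, _⟩ := hX.bd_comp k u' v' hc hlt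
        exact Or.inr (Or.inr ⟨X.src u', X.src v', Reach.src ru, Reach.src rv,
          composable_src hX hc hlt, hs⟩)
      · have hk : k + 1 = X.dim u' := by have := hc.2.1; omega
        obtain ⟨hs, _⟩ := hX.bd_comp_top k u' v' hc hk
        rw [hs]
        exact Or.inr (Or.inl (Reach.src rv))
  | tgt hr ih =>
    rcases ih with h1 | h1 | ⟨u', v', ru, rv, hc, rfl⟩
    · exact Or.inl (Reach.tgt h1)
    · exact Or.inr (Or.inl (Reach.tgt h1))
    · by_cases hlt : k + 1 < X.dim u'
      · obtain ⟨_, ht⟩ := hX.bd_comp k u' v' hc hlt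
        exact Or.inr (Or.inr ⟨X.tgt u', X.tgt v', Reach.tgt ru, Reach.tgt rv,
          composable_tgt hX hc hlt, ht⟩)
      · have hk : k + 1 = X.dim u' := by have := hc.2.1; omega
        obtain ⟨_, ht⟩ := hX.bd_comp_top k u' v' hc hk
        rw [ht]
        exact Or.inl (Reach.tgt ru)

end StmtAux
namespace StmtAux

variable {X : OmegaCat}

/-- The key property to be proved for every `n`-cell `a`: replacing an
occurrence of an indeterminate by a cell with target that indeterminate
gives a cell with target `a`. -/
def Pp (X : OmegaCat) (n : ℕ) {I : Set X.cell} (D : CellOcc X n I)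
    (rep : X.cell → ℕ → X.cell → X.cell) (a : X.cell) : Prop :=
  ∀ r v, r ∈ D.oI a → X.dim v = n + 1 → X.tgt v = D.oF a r →
    X.tgt (rep a r v) = a

def OKp (X : OmegaCat) (n : ℕ) {I : Set X.cell} (D : CellOcc X n I)
    (rep : X.cell → ℕ → X.cell → X.cell) (u : X.cell) : Prop :=
  ∀ w, Reach X u w → X.dim w = n → Pp X n D rep w

variable {n : ℕ} {I : Set X.cell} {D : CellOcc X n I}
  {rep : X.cell → ℕ → X.cell → X.cell}

lemma wdef_of (hX : X.Laws) (hn : 1 ≤ n) (hI : ∀ x ∈ I, X.dim x = n)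
    {a : X.cell} {r : ℕ} {v : X.cell} (ha : X.dim a = n) (hr : r ∈ D.oI a)
    (hv : X.dim v = n + 1) (htv : X.tgt v = D.oF a r) : WDef X n D a r v := by
  have hx : D.oF a r ∈ I := D.occ_mem a r hr
  have hdx : X.dim (D.oF a r) = n := hI _ hx
  have h2 : X.dim v - (n - 1) = 2 := by omega
  refine ⟨ha, hr, by omega, ?_, ?_⟩
  · rw [srcAt_def, h2, show (2 : ℕ) = 1 + 1 from rfl, Function.iterate_add_apply]
    rw [Function.iterate_one, hX.src_src v (by omega), htv]
  · rw [tgtAt_def, h2, show (2 : ℕ) = 1 + 1 from rfl, Function.iterate_add_apply]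
    rw [Function.iterate_one, htv]

lemma Pp_ind (hX : X.Laws) (hn : 1 ≤ n) (hI : ∀ x ∈ I, X.dim x = n)
    (hwh : IsWhisk X n D rep) {x : X.cell} (hx : x ∈ I) : Pp X n D rep x := by
  intro r v hr hv htv
  obtain ⟨r', hoI, hoF⟩ := D.occ_ind x hx
  have hrr : r = r' := by
    have := hr
    rw [hoI, Finset.mem_singleton] at this
    exact this
  subst hrr
  rw [hwh.2.1 x r v hx hoI (wdef_of hX hn hI (hI x hx) hr hv htv)]
  rw [htv, hoF]

lemma Pp_comp (hX : X.Laws) (hn : 1 ≤ n) (hI : ∀ x ∈ I, X.dim x = n)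
    (hwh : IsWhisk X n D rep) {k : ℕ} {b c : X.cell} (hk : k < n)
    (hdb : X.dim b = n) (hcomp : X.Composable k b c)
    (hPb : Pp X n D rep b) (hPc : Pp X n D rep c) :
    Pp X n D rep (X.comp k b c) := by
  intro r v hr hv htv
  obtain ⟨hdisj, huni, hfb, hfc⟩ := D.occ_comp k b c hk hdb hcomp
  have hdc : X.dim c = n := by rw [← hcomp.1, hdb]
  have hdcomp : X.dim (X.comp k b c) = n := by rw [hX.dim_comp k b c hcomp, hdb]
  have hwd : WDef X n D (X.comp k b c) r v := wdef_of hX hn hI hdcomp hr hv htv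
  rw [huni, Finset.mem_union] at hr
  rcases hr with hrb | hrc
  · have hof : D.oF (X.comp k b c) r = D.oF b r := hfb r hrb
    have htvb : X.tgt v = D.oF b r := by rw [htv, hof]
    have wdb : WDef X n D b r v := wdef_of hX hn hI hdb hrb hv htvb
    obtain ⟨hdw, hsw, htw⟩ := hwh.1 b r v wdb
    set w' := rep b r v with hw'
    have hdw' : X.dim w' = n + 1 := by rw [hdw, hv]
    have hre : rep (X.comp k b c) r v = X.wcomp k w' c :=
      (hwh.2.2 k b c r v hk hdb hcomp hwd).1 hrb
    have hwc : X.wcomp k w' c = X.comp k w' (X.ide c) := by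
      unfold OmegaCat.wcomp
      rw [hdw', hdc, show max (n+1) n = n + 1 from by omega]
      rw [idePad_def, idePad_def, hdw', hdc, Nat.sub_self,
        show n + 1 - n = 1 from by omega, Function.iterate_zero_apply,
        Function.iterate_one]
    have hcw : X.Composable k w' (X.ide c) := by
      refine ⟨by rw [hdw', hX.dim_ide, hdc], by omega, ?_⟩
      have e1 : X.srcAt k w' = X.srcAt k (X.src b) := by
        rw [← srcAt_srcAt hX (l := k) (k := n - 1) (by omega) (by omega : n - 1 ≤ X.dim w'),
          hsw]
      rw [e1, srcAt_src hX (by omega), tgtAt_ide hX (by omega), hcomp.2.2]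
    have hbd := hX.bd_comp k w' (X.ide c) hcw (by rw [hdw']; omega)
    have htb : X.tgt w' = b := hPb r v hrb hv htvb
    rw [hre, hwc, hbd.2, htb, hX.tgt_ide]
  · have hof : D.oF (X.comp k b c) r = D.oF c r := hfc r hrc
    have htvc : X.tgt v = D.oF c r := by rw [htv, hof]
    have wdc : WDef X n D c r v := wdef_of hX hn hI hdc hrc hv htvc
    obtain ⟨hdw, hsw, htw⟩ := hwh.1 c r v wdc
    set w' := rep c r v with hw'
    have hdw' : X.dim w' = n + 1 := by rw [hdw, hv]
    have hre : rep (X.comp k b c) r v = X.wcomp k b w' :=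
      (hwh.2.2 k b c r v hk hdb hcomp hwd).2 hrc
    have hwc : X.wcomp k b w' = X.comp k (X.ide b) w' := by
      unfold OmegaCat.wcomp
      rw [hdw', hdb, show max n (n+1) = n + 1 from by omega]
      rw [idePad_def, idePad_def, hdw', hdb, Nat.sub_self,
        show n + 1 - n = 1 from by omega, Function.iterate_zero_apply,
        Function.iterate_one]
    have hcw : X.Composable k (X.ide b) w' := by
      refine ⟨by rw [hdw', hX.dim_ide, hdb], by rw [hX.dim_ide, hdb]; omega, ?_⟩
      have e1 : X.tgtAt k w' = X.tgtAt k (X.tgt c) := by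
        rw [← tgtAt_tgtAt hX (l := k) (k := n - 1) (by omega) (by omega : n - 1 ≤ X.dim w'),
          htw]
      rw [e1, tgtAt_tgt hX (by omega), srcAt_ide hX (by omega), hcomp.2.2]
    have hbd := hX.bd_comp k (X.ide b) w' hcw (by rw [hX.dim_ide, hdb]; omega)
    rw [hre, hwc, hbd.2, hPc r v hrc hv htvc, hX.tgt_ide]

lemma OKp_low (hX : X.Laws) (hn : 1 ≤ n) {u : X.cell} (h : X.dim u ≤ n - 1) :
    OKp X n D rep u := by
  intro w hw hdw
  have := reach_dim hX hw
  omega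

lemma OKp_src {u : X.cell} (h : OKp X n D rep u) : OKp X n D rep (X.src u) := by
  intro w hw
  exact h w (Reach.trans (Reach.src (Reach.refl u)) hw)

lemma OKp_tgt {u : X.cell} (h : OKp X n D rep u) : OKp X n D rep (X.tgt u) := by
  intro w hw
  exact h w (Reach.trans (Reach.tgt (Reach.refl u)) hw)

lemma OKp_ide (hX : X.Laws) {u : X.cell} (h : OKp X n D rep u) :
    OKp X n D rep (X.ide u) := by
  intro w hw hdw
  rcases reach_ide hX hw with rfl | hr
  · intro r v hr' hv htv
    have hdu : X.dim u = n - 1 := by rw [hX.dim_ide] at hdw; omega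
    rw [D.occ_ide u hdu] at hr'
    exact absurd hr' (Finset.notMem_empty r)
  · exact h w hr hdw

lemma OKp_ind (hX : X.Laws) (hn : 1 ≤ n) (hI : ∀ x ∈ I, X.dim x = n)
    (hwh : IsWhisk X n D rep) {x : X.cell} (hx : x ∈ I) : OKp X n D rep x := by
  intro w hw hdw
  rcases reach_cases hw with rfl | hr | hr
  · exact Pp_ind hX hn hI hwh hx
  · have h1 : X.dim (X.src x) = n - 1 := by rw [hX.dim_src x (by rw [hI x hx]; omega), hI x hx]
    have := reach_dim hX hr
    omega
  · have h1 : X.dim (X.tgt x) = n - 1 := by rw [hX.dim_tgt x (by rw [hI x hx]; omega), hI x hx]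
    have := reach_dim hX hr
    omega

lemma OKp_comp (hX : X.Laws) (hn : 1 ≤ n) (hI : ∀ x ∈ I, X.dim x = n)
    (hwh : IsWhisk X n D rep) {k : ℕ} {u v : X.cell} (h : X.Composable k u v)
    (hu : OKp X n D rep u) (hv : OKp X n D rep v) :
    OKp X n D rep (X.comp k u v) := by
  intro w hw hdw
  rcases comp_reach hX h w hw with hr | hr | ⟨u', v', ru, rv, hc, rfl⟩
  · exact hu w hr hdw
  · exact hv w hr hdw
  · have hdu' : X.dim u' = n := by rw [hX.dim_comp k u' v' hc] at hdw; exact hdw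
    have hk : k < n := by have := hc.2.1; omega
    exact Pp_comp hX hn hI hwh hk hdu' hc (hu u' ru hdu') (hv v' rv (by rw [← hc.1, hdu']))

end StmtAux
namespace StmtAux

attribute [local instance] Classical.propDecidable

variable {X : OmegaCat}

lemma composable_exch_mid (hX : X.Laws) {l k : ℕ} {t t₁ s s₁ : X.cell} (hlk : l < k)
    (h1 : X.Composable k t t₁) (h2 : X.Composable k s s₁)
    (hts : X.Composable l t s) (hts₁ : X.Composable l t₁ s₁) :
    X.Composable k (X.comp l t s) (X.comp l t₁ s₁) := by
  have hd := hX.dim_comp l t s hts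
  have hd₁ := hX.dim_comp l t₁ s₁ hts₁
  have hdt₁ : X.dim t₁ = X.dim t := h1.1.symm
  have hk := h1.2.1
  refine ⟨by rw [hd, hd₁, hdt₁], by rw [hd]; exact h1.2.1, ?_⟩
  have hs := (bdSrcIter hX (X.dim t - k) hts (by omega)).1
  have ht := (bdTgtIter hX (X.dim t₁ - k) hts₁ (by omega)).1
  rw [hdt₁] at ht
  have e1 : X.src^[X.dim t - k] t = X.srcAt k t := by rw [srcAt_def]
  have e2 : X.src^[X.dim t - k] s = X.srcAt k s := by rw [srcAt_def, ← hts.1]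
  have e3 : X.tgt^[X.dim t - k] t₁ = X.tgtAt k t₁ := by rw [tgtAt_def, hdt₁]
  have e4 : X.tgt^[X.dim t - k] s₁ = X.tgtAt k s₁ := by rw [tgtAt_def, ← hts₁.1, hdt₁]
  rw [srcAt_def, hd, tgtAt_def, hd₁, hdt₁, hs, ht, e1, e2, e3, e4, h1.2.2, h2.2.2]

/-- The sub-ω-category of `X` on the cells all of whose `n`-dimensional
iterated boundaries satisfy the key property `Pp`. -/
noncomputable def Zc (X : OmegaCat) (hX : X.Laws) (n : ℕ) {I : Set X.cell} (D : CellOcc X n I)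
    (rep : X.cell → ℕ → X.cell → X.cell) (hn : 1 ≤ n) (hI : ∀ x ∈ I, X.dim x = n)
    (hwh : IsWhisk X n D rep) : OmegaCat where
  cell := {u : X.cell // OKp X n D rep u}
  dim z := X.dim z.1
  src z := ⟨X.src z.1, OKp_src z.2⟩
  tgt z := ⟨X.tgt z.1, OKp_tgt z.2⟩
  ide z := ⟨X.ide z.1, OKp_ide hX z.2⟩
  comp k z w :=
    if h : X.Composable k z.1 w.1 then
      ⟨X.comp k z.1 w.1, OKp_comp hX hn hI hwh h z.2 w.2⟩
    else z

variable (hX : X.Laws) {n : ℕ} {I : Set X.cell} {D : CellOcc X n I}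
  {rep : X.cell → ℕ → X.cell → X.cell} (hn : 1 ≤ n) (hI : ∀ x ∈ I, X.dim x = n)
  (hwh : IsWhisk X n D rep)

lemma Zc_dim (z : (Zc X hX n D rep hn hI hwh).cell) :
    (Zc X hX n D rep hn hI hwh).dim z = X.dim z.1 := rfl

lemma Zc_src (z : (Zc X hX n D rep hn hI hwh).cell) :
    ((Zc X hX n D rep hn hI hwh).src z).1 = X.src z.1 := rfl

lemma Zc_tgt (z : (Zc X hX n D rep hn hI hwh).cell) :
    ((Zc X hX n D rep hn hI hwh).tgt z).1 = X.tgt z.1 := rfl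

lemma Zc_ide (z : (Zc X hX n D rep hn hI hwh).cell) :
    ((Zc X hX n D rep hn hI hwh).ide z).1 = X.ide z.1 := rfl

lemma Zc_comp_val {k : ℕ} {z w : (Zc X hX n D rep hn hI hwh).cell}
    (h : X.Composable k z.1 w.1) :
    ((Zc X hX n D rep hn hI hwh).comp k z w).1 = X.comp k z.1 w.1 := by
  show (dite (X.Composable k z.1 w.1) _ _ : {u : X.cell // OKp X n D rep u}).1 = _
  exact congrArg Subtype.val (dif_pos h)

lemma Zc_iter_src : ∀ (m : ℕ) (z : (Zc X hX n D rep hn hI hwh).cell),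
    ((Zc X hX n D rep hn hI hwh).src^[m] z).1 = X.src^[m] z.1 := by
  intro m
  induction m with
  | zero => intro z; rfl
  | succ m ih =>
    intro z
    rw [Function.iterate_succ_apply', Function.iterate_succ_apply', Zc_src, ih]

lemma Zc_iter_tgt : ∀ (m : ℕ) (z : (Zc X hX n D rep hn hI hwh).cell),
    ((Zc X hX n D rep hn hI hwh).tgt^[m] z).1 = X.tgt^[m] z.1 := by
  intro m
  induction m with
  | zero => intro z; rfl
  | succ m ih =>
    intro z
    rw [Function.iterate_succ_apply', Function.iterate_succ_apply', Zc_tgt, ih]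

lemma Zc_iter_ide : ∀ (m : ℕ) (z : (Zc X hX n D rep hn hI hwh).cell),
    ((Zc X hX n D rep hn hI hwh).ide^[m] z).1 = X.ide^[m] z.1 := by
  intro m
  induction m with
  | zero => intro z; rfl
  | succ m ih =>
    intro z
    rw [Function.iterate_succ_apply', Function.iterate_succ_apply', Zc_ide, ih]

lemma Zc_srcAt (k : ℕ) (z : (Zc X hX n D rep hn hI hwh).cell) :
    ((Zc X hX n D rep hn hI hwh).srcAt k z).1 = X.srcAt k z.1 := by
  show (((Zc X hX n D rep hn hI hwh).src)^[_] z).1 = _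
  rw [Zc_iter_src]
  rfl

lemma Zc_tgtAt (k : ℕ) (z : (Zc X hX n D rep hn hI hwh).cell) :
    ((Zc X hX n D rep hn hI hwh).tgtAt k z).1 = X.tgtAt k z.1 := by
  show (((Zc X hX n D rep hn hI hwh).tgt)^[_] z).1 = _
  rw [Zc_iter_tgt]
  rfl

lemma Zc_idePad (m : ℕ) (z : (Zc X hX n D rep hn hI hwh).cell) :
    ((Zc X hX n D rep hn hI hwh).idePad m z).1 = X.idePad m z.1 := by
  show (((Zc X hX n D rep hn hI hwh).ide)^[_] z).1 = _
  rw [Zc_iter_ide]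
  rfl

lemma Zc_composable {k : ℕ} {z w : (Zc X hX n D rep hn hI hwh).cell} :
    (Zc X hX n D rep hn hI hwh).Composable k z w ↔ X.Composable k z.1 w.1 := by
  unfold OmegaCat.Composable
  constructor
  · rintro ⟨h1, h2, h3⟩
    refine ⟨h1, h2, ?_⟩
    have h4 := congrArg Subtype.val h3
    rwa [Zc_srcAt hX hn hI hwh, Zc_tgtAt hX hn hI hwh] at h4
  · rintro ⟨h1, h2, h3⟩
    refine ⟨h1, h2, Subtype.ext ?_⟩
    rw [Zc_srcAt hX hn hI hwh, Zc_tgtAt hX hn hI hwh]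
    exact h3

lemma Zc_laws : (Zc X hX n D rep hn hI hwh).Laws := by
  constructor
  case src_dim0 =>
    intro z h
    exact ⟨Subtype.ext (hX.src_dim0 z.1 h).1, Subtype.ext (hX.src_dim0 z.1 h).2⟩
  case dim_src => intro z h; exact hX.dim_src z.1 h
  case dim_tgt => intro z h; exact hX.dim_tgt z.1 h
  case src_src => intro z h; exact Subtype.ext (hX.src_src z.1 h)
  case tgt_src => intro z h; exact Subtype.ext (hX.tgt_src z.1 h)
  case dim_ide => intro z; exact hX.dim_ide z.1
  case src_ide => intro z; exact Subtype.ext (hX.src_ide z.1)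
  case tgt_ide => intro z; exact Subtype.ext (hX.tgt_ide z.1)
  case dim_comp =>
    intro k z w h
    have h' := (Zc_composable hX hn hI hwh).mp h
    show X.dim ((Zc X hX n D rep hn hI hwh).comp k z w).1 = X.dim z.1
    rw [Zc_comp_val hX hn hI hwh h']
    exact hX.dim_comp k z.1 w.1 h'
  case bd_comp_top =>
    intro k z w h hk
    have h' := (Zc_composable hX hn hI hwh).mp h
    have hb := hX.bd_comp_top k z.1 w.1 h' hk
    constructor <;> apply Subtype.ext
    · show X.src ((Zc X hX n D rep hn hI hwh).comp k z w).1 = X.src w.1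
      rw [Zc_comp_val hX hn hI hwh h']; exact hb.1
    · show X.tgt ((Zc X hX n D rep hn hI hwh).comp k z w).1 = X.tgt z.1
      rw [Zc_comp_val hX hn hI hwh h']; exact hb.2
  case bd_comp =>
    intro k z w h hk
    have h' := (Zc_composable hX hn hI hwh).mp h
    have hb := hX.bd_comp k z.1 w.1 h' hk
    have hcs := composable_src hX h' hk
    have hct := composable_tgt hX h' hk
    constructor <;> apply Subtype.ext
    · show X.src ((Zc X hX n D rep hn hI hwh).comp k z w).1 =
        ((Zc X hX n D rep hn hI hwh).comp k _ _).1
      rw [Zc_comp_val hX hn hI hwh h', Zc_comp_val hX hn hI hwh hcs]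
      exact hb.1
    · show X.tgt ((Zc X hX n D rep hn hI hwh).comp k z w).1 =
        ((Zc X hX n D rep hn hI hwh).comp k _ _).1
      rw [Zc_comp_val hX hn hI hwh h', Zc_comp_val hX hn hI hwh hct]
      exact hb.2
  case comp_assoc =>
    intro k z w y h1 h2
    have h1' := (Zc_composable hX hn hI hwh).mp h1
    have h2' := (Zc_composable hX hn hI hwh).mp h2
    have hL : X.Composable k (X.comp k z.1 w.1) y.1 := composable_compL hX h1' h2'
    have hR : X.Composable k z.1 (X.comp k w.1 y.1) := composable_compR hX h1' h2'
    apply Subtype.ext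
    have e1 : X.Composable k ((Zc X hX n D rep hn hI hwh).comp k z w).1 y.1 := by
      rw [Zc_comp_val hX hn hI hwh h1']; exact hL
    have e2 : X.Composable k z.1 ((Zc X hX n D rep hn hI hwh).comp k w y).1 := by
      rw [Zc_comp_val hX hn hI hwh h2']; exact hR
    rw [Zc_comp_val hX hn hI hwh e1, Zc_comp_val hX hn hI hwh e2,
      Zc_comp_val hX hn hI hwh h1', Zc_comp_val hX hn hI hwh h2']
    exact hX.comp_assoc k z.1 w.1 y.1 h1' h2'
  case exch =>
    intro l k t t₁ s s₁ hlk h1 h2 h3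
    have h1' := (Zc_composable hX hn hI hwh).mp h1
    have h2' := (Zc_composable hX hn hI hwh).mp h2
    have h3' := (Zc_composable hX hn hI hwh).mp h3
    rw [Zc_comp_val hX hn hI hwh h1', Zc_comp_val hX hn hI hwh h2'] at h3'
    obtain ⟨hts, hts₁⟩ := composable_low hX hlk h1' h2' h3'
    apply Subtype.ext
    have e1 : X.Composable l ((Zc X hX n D rep hn hI hwh).comp k t t₁).1
        ((Zc X hX n D rep hn hI hwh).comp k s s₁).1 := by
      rw [Zc_comp_val hX hn hI hwh h1', Zc_comp_val hX hn hI hwh h2']; exact h3'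
    have e2 : X.Composable k ((Zc X hX n D rep hn hI hwh).comp l t s).1
        ((Zc X hX n D rep hn hI hwh).comp l t₁ s₁).1 := by
      rw [Zc_comp_val hX hn hI hwh hts, Zc_comp_val hX hn hI hwh hts₁]
      exact composable_exch_mid hX hlk h1' h2' hts hts₁
    rw [Zc_comp_val hX hn hI hwh e1, Zc_comp_val hX hn hI hwh e2,
      Zc_comp_val hX hn hI hwh h1', Zc_comp_val hX hn hI hwh h2',
      Zc_comp_val hX hn hI hwh hts, Zc_comp_val hX hn hI hwh hts₁]
    exact hX.exch l k t.1 t₁.1 s.1 s₁.1 hlk h1' h2' h3'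
  case comp_id_left =>
    intro k z hk
    have hc := composable_idePad_left hX (hk : k < X.dim z.1)
    apply Subtype.ext
    have e1 : X.Composable k
        ((Zc X hX n D rep hn hI hwh).idePad ((Zc X hX n D rep hn hI hwh).dim z)
          ((Zc X hX n D rep hn hI hwh).tgtAt k z)).1 z.1 := by
      rw [Zc_idePad hX hn hI hwh]
      have : ((Zc X hX n D rep hn hI hwh).tgtAt k z).1 = X.tgtAt k z.1 :=
        Zc_tgtAt hX hn hI hwh k z
      rw [this]
      exact hc
    rw [Zc_comp_val hX hn hI hwh e1, Zc_idePad hX hn hI hwh]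
    have : ((Zc X hX n D rep hn hI hwh).tgtAt k z).1 = X.tgtAt k z.1 :=
      Zc_tgtAt hX hn hI hwh k z
    rw [this]
    exact hX.comp_id_left k z.1 hk
  case comp_id_right =>
    intro k z hk
    have hc := composable_idePad_right hX (hk : k < X.dim z.1)
    apply Subtype.ext
    have e1 : X.Composable k z.1
        ((Zc X hX n D rep hn hI hwh).idePad ((Zc X hX n D rep hn hI hwh).dim z)
          ((Zc X hX n D rep hn hI hwh).srcAt k z)).1 := by
      rw [Zc_idePad hX hn hI hwh]
      have : ((Zc X hX n D rep hn hI hwh).srcAt k z).1 = X.srcAt k z.1 :=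
        Zc_srcAt hX hn hI hwh k z
      rw [this]
      exact hc
    rw [Zc_comp_val hX hn hI hwh e1, Zc_idePad hX hn hI hwh]
    have : ((Zc X hX n D rep hn hI hwh).srcAt k z).1 = X.srcAt k z.1 :=
      Zc_srcAt hX hn hI hwh k z
    rw [this]
    exact hX.comp_id_right k z.1 hk
  case ide_comp =>
    intro k z w h
    have h' := (Zc_composable hX hn hI hwh).mp h
    apply Subtype.ext
    have e1 : X.Composable k ((Zc X hX n D rep hn hI hwh).ide z).1
        ((Zc X hX n D rep hn hI hwh).ide w).1 := composable_ide hX h'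
    show X.ide ((Zc X hX n D rep hn hI hwh).comp k z w).1 =
      ((Zc X hX n D rep hn hI hwh).comp k _ _).1
    rw [Zc_comp_val hX hn hI hwh h', Zc_comp_val hX hn hI hwh e1]
    exact hX.ide_comp k z.1 w.1 h'

end StmtAux
namespace StmtAux

attribute [local instance] Classical.propDecidable

variable {X : OmegaCat}

lemma OKp_all (hX : X.Laws) {n : ℕ} {I : Set X.cell} {D : CellOcc X n I}
    {rep : X.cell → ℕ → X.cell → X.cell} (hn : 1 ≤ n)
    (hfree : FreeAtLevel X n I) (hwh : IsWhisk X n D rep) :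
    ∀ u : X.cell, X.dim u ≤ n → OKp X n D rep u := by
  intro u0 hu0
  have hI : ∀ x ∈ I, X.dim x = n := hfree.1
  set Z := Zc X hX n D rep hn hI hwh with hZdef
  have Zcomp : ∀ {k : ℕ} {z w : Z.cell}, X.Composable k z.1 w.1 →
      (Z.comp k z w).1 = X.comp k z.1 w.1 := fun h => Zc_comp_val hX hn hI hwh h
  have Zcompo : ∀ {k : ℕ} {z w : Z.cell},
      Z.Composable k z w ↔ X.Composable k z.1 w.1 := Zc_composable hX hn hI hwh
  have hOK0 : OKp X n D rep (X.src^[X.dim u0] u0) :=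
    OKp_low hX hn (by rw [dimSrcIter hX _ _ (le_refl _)]; omega)
  let z₀ : Z.cell := ⟨X.src^[X.dim u0] u0, hOK0⟩
  let E : X.cell → Z.cell := fun u =>
    if h : OKp X n D rep u then ⟨u, h⟩ else z₀
  have hEval : ∀ u (h : OKp X n D rep u), E u = ⟨u, h⟩ := fun u h => dif_pos h
  have hext : ExtendsAt Z X (n-1) E := by
    refine ⟨?_, ?_, ?_, ?_, ?_, ?_⟩
    · intro a b ha hb he
      rw [hEval a (OKp_low hX hn ha), hEval b (OKp_low hX hn hb)] at he
      exact congrArg Subtype.val he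
    · intro z hz
      exact ⟨z.1, hz, by rw [hEval z.1 z.2]; exact Subtype.ext rfl⟩
    · intro a ha
      rw [hEval a (OKp_low hX hn ha)]
      rfl
    · intro a h0 ha
      have h1 := OKp_low hX hn (D := D) (rep := rep) ha
      rw [hEval a h1, hEval (X.src a) (OKp_src h1), hEval (X.tgt a) (OKp_tgt h1)]
      exact ⟨Subtype.ext rfl, Subtype.ext rfl⟩
    · intro a ha
      have h1 := OKp_low hX hn (D := D) (rep := rep) (le_of_lt ha)
      have h2 : X.dim (X.ide a) ≤ n - 1 := by rw [hX.dim_ide]; omega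
      rw [hEval a h1, hEval (X.ide a) (OKp_low hX hn h2)]
      exact Subtype.ext rfl
    · intro k a b hc ha
      have h1 := OKp_low hX hn (D := D) (rep := rep) ha
      have h2 := OKp_low hX hn (D := D) (rep := rep)
        (show X.dim b ≤ n - 1 by rw [← hc.1]; exact ha)
      have h3 : X.dim (X.comp k a b) ≤ n - 1 := by rw [hX.dim_comp k a b hc]; exact ha
      rw [hEval a h1, hEval b h2, hEval (X.comp k a b) (OKp_low hX hn h3)]
      exact Subtype.ext (Zcomp hc)
  have hφ : ∀ x ∈ I, Z.dim (E x) = n ∧ Z.src (E x) = E (X.src x) ∧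
      Z.tgt (E x) = E (X.tgt x) := by
    intro x hx
    have hOKx := OKp_ind hX hn hI hwh hx
    rw [hEval x hOKx, hEval (X.src x) (OKp_src hOKx), hEval (X.tgt x) (OKp_tgt hOKx)]
    exact ⟨hI x hx, Subtype.ext rfl, Subtype.ext rfl⟩
  obtain ⟨G, hG, -⟩ := hfree.2 Z (Zc_laws hX hn hI hwh) E hext E hφ
  have hextX : ExtendsAt X X (n-1) id :=
    ⟨fun a b _ _ h => h, fun u hu => ⟨u, hu, rfl⟩, fun a _ => rfl,
      fun a _ _ => ⟨rfl, rfl⟩, fun a _ => rfl, fun k a b _ _ => rfl⟩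
  obtain ⟨G₀, hG₀, huniq⟩ := hfree.2 X hX id hextX id (fun x hx => ⟨hI x hx, rfl, rfl⟩)
  have hid : ∀ u, X.dim u ≤ n → id u = G₀ u :=
    huniq id ⟨fun u _ => rfl, fun x _ => rfl, fun u _ => rfl,
      fun u _ _ => ⟨rfl, rfl⟩, fun k u v _ _ => rfl, fun u _ => rfl⟩
  obtain ⟨hGe, hGφ, hGd, hGst, hGc, hGi⟩ := hG
  have hGsrc : ∀ m (u : X.cell), X.dim u ≤ n → m ≤ X.dim u →
      Z.src^[m] (G u) = G (X.src^[m] u) := by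
    intro m
    induction m with
    | zero => intro u _ _; rfl
    | succ m ih =>
      intro u hun hm
      have hdm : X.dim (X.src^[m] u) = X.dim u - m := dimSrcIter hX m u (by omega)
      rw [Function.iterate_succ_apply' Z.src, ih u hun (by omega),
        (hGst (X.src^[m] u) (by omega) (by omega)).1,
        ← Function.iterate_succ_apply' X.src]
  have hGtgt : ∀ m (u : X.cell), X.dim u ≤ n → m ≤ X.dim u →
      Z.tgt^[m] (G u) = G (X.tgt^[m] u) := by
    intro m
    induction m with
    | zero => intro u _ _; rfl
    | succ m ih =>
      intro u hun hm
      have hdm : X.dim (X.tgt^[m] u) = X.dim u - m := dimTgtIter hX m u (by omega)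
      rw [Function.iterate_succ_apply' Z.tgt, ih u hun (by omega),
        (hGst (X.tgt^[m] u) (by omega) (by omega)).2,
        ← Function.iterate_succ_apply' X.tgt]
  have hvalcond : (∀ u, X.dim u ≤ n - 1 → (G u).1 = id u) ∧
      (∀ x ∈ I, (G x).1 = id x) ∧
      (∀ u, X.dim u ≤ n → X.dim (G u).1 = X.dim u) ∧
      (∀ u, 0 < X.dim u → X.dim u ≤ n →
        X.src (G u).1 = (G (X.src u)).1 ∧ X.tgt (G u).1 = (G (X.tgt u)).1) ∧
      (∀ k u v, X.Composable k u v → X.dim u ≤ n →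
        (G (X.comp k u v)).1 = X.comp k (G u).1 (G v).1) ∧
      (∀ u, X.dim u < n → (G (X.ide u)).1 = X.ide (G u).1) := by
    refine ⟨?_, ?_, ?_, ?_, ?_, ?_⟩
    · intro u h
      rw [hGe u h, hEval u (OKp_low hX hn h)]
      rfl
    · intro x hx
      rw [hGφ x hx, hEval x (OKp_ind hX hn hI hwh hx)]
      rfl
    · intro u h
      exact hGd u h
    · intro u h0 h
      exact ⟨congrArg Subtype.val (hGst u h0 h).1, congrArg Subtype.val (hGst u h0 h).2⟩
    · intro k u v hc h
      have hdv : X.dim v ≤ n := by rw [← hc.1]; exact h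
      have d1 : Z.dim (G u) = X.dim u := hGd u h
      have d2 : Z.dim (G v) = X.dim v := hGd v hdv
      have e1 : Z.srcAt k (G u) = G (X.srcAt k u) := by
        show Z.src^[Z.dim (G u) - k] (G u) = G (X.src^[X.dim u - k] u)
        rw [d1]
        exact hGsrc (X.dim u - k) u h (by omega)
      have e2 : Z.tgtAt k (G v) = G (X.tgtAt k v) := by
        show Z.tgt^[Z.dim (G v) - k] (G v) = G (X.tgt^[X.dim v - k] v)
        rw [d2]
        exact hGtgt (X.dim v - k) v hdv (by omega)
      have hZc : Z.Composable k (G u) (G v) :=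
        ⟨d1.trans (hc.1.trans d2.symm), lt_of_lt_of_eq hc.2.1 d1.symm,
          (e1.trans (congrArg G hc.2.2)).trans e2.symm⟩
      have hXc : X.Composable k (G u).1 (G v).1 := Zcompo.mp hZc
      have h6 : (G (X.comp k u v)).1 = (Z.comp k (G u) (G v)).1 :=
        congrArg Subtype.val (hGc k u v hc h)
      rw [h6, Zcomp hXc]
    · intro u h
      exact congrArg Subtype.val (hGi u h)
  have hGu : ∀ u, X.dim u ≤ n → (G u).1 = G₀ u := huniq (fun u => (G u).1) hvalcond
  have hval : (G u0).1 = u0 := by rw [hGu u0 hu0, ← hid u0 hu0]; rfl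
  have hOK := (G u0).2
  rwa [hval] at hOK

end StmtAux
open StmtAux in
/-- Interaction of the ω-categorical compositions with placed composition of
`(n+1)`-cells, in an ω-category with `X_n = A[I]` free:
(1) `u •_k (v' ∘_r v'') = (u •_k v') ∘_r v''` for `k ≤ n`;
(2) `(u' ∘_r u'') •_k v = (u' •_k v) ∘_r u''` for `k < n`;
whenever the left-hand sides are defined. -/
theorem stmt16 (X : OmegaCat) (hX : X.Laws) (n : ℕ) (hn : 1 ≤ n)
    (I : Set X.cell) (hfree : FreeAtLevel X n I) (D : CellOcc X n I)
    (rep : X.cell → ℕ → X.cell → X.cell) (hrep : IsWhisk X n D rep) :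
    (∀ k u v' v'' r, k ≤ n → PDef X n D v' r v'' →
      X.Composable k u (pcomp X n rep v' r v'') →
      X.comp k u (pcomp X n rep v' r v'') =
        pcomp X n rep (X.comp k u v') r v'') ∧
    (∀ k u' u'' v r, k < n → PDef X n D u' r u'' →
      X.Composable k (pcomp X n rep u' r u'') v →
      X.comp k (pcomp X n rep u' r u'') v =
        pcomp X n rep (X.comp k u' v) r u'') := by
  have hI : ∀ x ∈ I, X.dim x = n := hfree.1
  -- generic facts about the whiskered filler of a placed composition
  have key : ∀ v' v'' r, PDef X n D v' r v'' →
      X.Composable n v' (rep (X.src v') r v'') ∧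
      X.dim (rep (X.src v') r v'') = n + 1 ∧
      X.srcAt (n-1) (rep (X.src v') r v'') = X.src (X.src v') := by
    rintro v' v'' r ⟨hd1, hd2, hr, htv⟩
    have hda : X.dim (X.src v') = n := by rw [hX.dim_src v' (by omega), hd1]; omega
    have hOKa := OKp_all hX hn hfree hrep (X.src v') (by omega)
    have hPa : Pp X n D rep (X.src v') := hOKa _ (Reach.refl _) hda
    have htw : X.tgt (rep (X.src v') r v'') = X.src v' := hPa r v'' hr hd2 htv
    have wda : WDef X n D (X.src v') r v'' := wdef_of hX hn hI hda hr hd2 htv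
    obtain ⟨hdw, hsw, htw'⟩ := hrep.1 (X.src v') r v'' wda
    have hdw' : X.dim (rep (X.src v') r v'') = n + 1 := by rw [hdw, hd2]
    refine ⟨⟨by rw [hd1, hdw'], by omega, ?_⟩, hdw', hsw⟩
    rw [srcAt_def, tgtAt_def, hd1, hdw', show n + 1 - n = 1 from by omega,
      Function.iterate_one, Function.iterate_one, htw]
  constructor
  · -- part (1)
    intro k u v' v'' r hk hp hcomp
    obtain ⟨hCvw, hdw', hsw⟩ := key v' v'' r hp
    obtain ⟨hd1, hd2, hr, htv⟩ := hp
    show X.comp k u (X.comp n v' (rep (X.src v') r v'')) =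
      X.comp n (X.comp k u v') (rep (X.src (X.comp k u v')) r v'')
    replace hcomp : X.Composable k u (X.comp n v' (rep (X.src v') r v'')) := hcomp
    have hdP : X.dim (X.comp n v' (rep (X.src v') r v'')) = n + 1 := by
      rw [hX.dim_comp n _ _ hCvw, hd1]
    have hdu : X.dim u = n + 1 := by rw [hcomp.1, hdP]
    rcases Nat.lt_or_ge k n with hkn | hkn
    · -- k < n
      have hCuv' : X.Composable k u v' := by
        refine ⟨by rw [hdu, hd1], by omega, ?_⟩
        rw [hcomp.2.2, tgtAt_comp_le hX hCvw (le_of_lt hkn)]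
      have hsrc : X.src (X.comp k u v') = X.comp k (X.src u) (X.src v') :=
        (hX.bd_comp k u v' hCuv' (by omega)).1
      have hcsrc : X.Composable k (X.src u) (X.src v') :=
        composable_src hX hCuv' (by omega)
      have hdsu : X.dim (X.src u) = n := by rw [hX.dim_src u (by omega), hdu]; omega
      have hda : X.dim (X.src v') = n := by rw [hX.dim_src v' (by omega), hd1]; omega
      obtain ⟨hdisj, huni, hfb, hfc⟩ := D.occ_comp k (X.src u) (X.src v') hkn hdsu hcsrc
      have hrmem : r ∈ D.oI (X.comp k (X.src u) (X.src v')) := by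
        rw [huni]; exact Finset.mem_union_right _ hr
      have hof : D.oF (X.comp k (X.src u) (X.src v')) r = D.oF (X.src v') r := hfc r hr
      have hdcsn : X.dim (X.comp k (X.src u) (X.src v')) = n := by
        rw [hX.dim_comp k _ _ hcsrc, hdsu]
      have wdc : WDef X n D (X.comp k (X.src u) (X.src v')) r v'' :=
        wdef_of hX hn hI hdcsn hrmem hd2 (htv.trans hof.symm)
      have hrepc : rep (X.comp k (X.src u) (X.src v')) r v'' =
          X.wcomp k (X.src u) (rep (X.src v') r v'') :=
        (hrep.2.2 k (X.src u) (X.src v') r v'' hkn hdsu hcsrc wdc).2 hr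
      have hwc : X.wcomp k (X.src u) (rep (X.src v') r v'') =
          X.comp k (X.ide (X.src u)) (rep (X.src v') r v'') := by
        unfold OmegaCat.wcomp
        rw [hdsu, hdw', show max n (n+1) = n + 1 from by omega, idePad_def, idePad_def,
          hdsu, hdw', Nat.sub_self, show n + 1 - n = 1 from by omega,
          Function.iterate_zero_apply, Function.iterate_one]
      have hue : X.comp n u (X.ide (X.src u)) = u := by
        have e : X.idePad (X.dim u) (X.srcAt n u) = X.ide (X.src u) := by
          rw [srcAt_def, hdu, show n + 1 - n = 1 from by omega, Function.iterate_one,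
            idePad_def, hX.dim_src u (by omega), hdu,
            show n + 1 - (n + 1 - 1) = 1 from by omega, Function.iterate_one]
        rw [← e]
        exact hX.comp_id_right n u (by omega)
      have hC1 : X.Composable n u (X.ide (X.src u)) := by
        refine ⟨by rw [hX.dim_ide, hdsu, hdu], by omega, ?_⟩
        rw [srcAt_def, tgtAt_def, hdu, hX.dim_ide, hdsu,
          show n + 1 - n = 1 from by omega, Function.iterate_one,
          Function.iterate_one, hX.tgt_ide]
      have hC2 : X.Composable k (X.comp n u (X.ide (X.src u)))
          (X.comp n v' (rep (X.src v') r v'')) := by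
        rw [hue]; exact hcomp
      rw [hsrc, hrepc, hwc]
      calc X.comp k u (X.comp n v' (rep (X.src v') r v''))
          = X.comp k (X.comp n u (X.ide (X.src u)))
              (X.comp n v' (rep (X.src v') r v'')) := by rw [hue]
        _ = X.comp n (X.comp k u v')
              (X.comp k (X.ide (X.src u)) (rep (X.src v') r v'')) :=
            hX.exch k n u (X.ide (X.src u)) v' (rep (X.src v') r v'') hkn hC1 hCvw hC2
    · -- k = n
      have hkeq : k = n := by omega
      subst hkeq
      have hCuv' : X.Composable k u v' := by
        refine ⟨by rw [hdu, hd1], by omega, ?_⟩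
        rw [hcomp.2.2, (comp_bdAt hX _ rfl hCvw).2]
      have hsrc : X.src (X.comp k u v') = X.src v' :=
        (hX.bd_comp_top k u v' hCuv' (by omega)).1
      rw [hsrc]
      exact (hX.comp_assoc k u v' (rep (X.src v') r v'') hCuv' hCvw).symm
  · -- part (2)
    intro k u' u'' v r hk hp hcomp
    obtain ⟨hCuw, hdw', hsw⟩ := key u' u'' r hp
    obtain ⟨hd1, hd2, hr, htv⟩ := hp
    show X.comp k (X.comp n u' (rep (X.src u') r u'')) v =
      X.comp n (X.comp k u' v) (rep (X.src (X.comp k u' v)) r u'')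
    replace hcomp : X.Composable k (X.comp n u' (rep (X.src u') r u'')) v := hcomp
    have hdP : X.dim (X.comp n u' (rep (X.src u') r u'')) = n + 1 := by
      rw [hX.dim_comp n _ _ hCuw, hd1]
    have hdv : X.dim v = n + 1 := by rw [← hcomp.1, hdP]
    have hda : X.dim (X.src u') = n := by rw [hX.dim_src u' (by omega), hd1]; omega
    have hdssu : X.dim (X.src (X.src u')) = n - 1 := by
      rw [hX.dim_src (X.src u') (by omega), hda]
    have hCu'v : X.Composable k u' v := by
      refine ⟨by rw [hd1, hdv], by omega, ?_⟩
      have e1 : X.srcAt k (rep (X.src u') r u'') = X.srcAt k (X.src (X.src u')) := by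
        rw [← srcAt_srcAt hX (l := k) (k := n - 1) (by omega)
          (by rw [hdw']; omega), hsw]
      have e2 : X.srcAt k u' = X.srcAt k (rep (X.src u') r u'') := by
        rw [e1, srcAt_src hX (by rw [hda]; omega), srcAt_src hX (by rw [hd1]; omega)]
      rw [e2, ← srcAt_comp_le hX hCuw (le_of_lt hk)]
      exact hcomp.2.2
    have hsrc : X.src (X.comp k u' v) = X.comp k (X.src u') (X.src v) :=
      (hX.bd_comp k u' v hCu'v (by rw [hd1]; omega)).1
    have hcsrc : X.Composable k (X.src u') (X.src v) :=
      composable_src hX hCu'v (by rw [hd1]; omega)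
    have hdsv : X.dim (X.src v) = n := by rw [hX.dim_src v (by omega), hdv]; omega
    obtain ⟨hdisj, huni, hfb, hfc⟩ := D.occ_comp k (X.src u') (X.src v) hk hda hcsrc
    have hrmem : r ∈ D.oI (X.comp k (X.src u') (X.src v)) := by
      rw [huni]; exact Finset.mem_union_left _ hr
    have hof : D.oF (X.comp k (X.src u') (X.src v)) r = D.oF (X.src u') r := hfb r hr
    have hdcsn : X.dim (X.comp k (X.src u') (X.src v)) = n := by
      rw [hX.dim_comp k _ _ hcsrc, hda]
    have wdc : WDef X n D (X.comp k (X.src u') (X.src v)) r u'' :=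
      wdef_of hX hn hI hdcsn hrmem hd2 (htv.trans hof.symm)
    have hrepc : rep (X.comp k (X.src u') (X.src v)) r u'' =
        X.wcomp k (rep (X.src u') r u'') (X.src v) :=
      (hrep.2.2 k (X.src u') (X.src v) r u'' hk hda hcsrc wdc).1 hr
    have hwc : X.wcomp k (rep (X.src u') r u'') (X.src v) =
        X.comp k (rep (X.src u') r u'') (X.ide (X.src v)) := by
      unfold OmegaCat.wcomp
      rw [hdsv, hdw', show max (n+1) n = n + 1 from by omega, idePad_def, idePad_def,
        hdsv, hdw', Nat.sub_self, show n + 1 - n = 1 from by omega,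
        Function.iterate_zero_apply, Function.iterate_one]
    have hue : X.comp n v (X.ide (X.src v)) = v := by
      have e : X.idePad (X.dim v) (X.srcAt n v) = X.ide (X.src v) := by
        rw [srcAt_def, hdv, show n + 1 - n = 1 from by omega, Function.iterate_one,
          idePad_def, hX.dim_src v (by omega), hdv,
          show n + 1 - (n + 1 - 1) = 1 from by omega, Function.iterate_one]
      rw [← e]
      exact hX.comp_id_right n v (by omega)
    have hC1 : X.Composable n v (X.ide (X.src v)) := by
      refine ⟨by rw [hX.dim_ide, hdsv, hdv], by omega, ?_⟩
      rw [srcAt_def, tgtAt_def, hdv, hX.dim_ide, hdsv,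
        show n + 1 - n = 1 from by omega, Function.iterate_one,
        Function.iterate_one, hX.tgt_ide]
    have hC2 : X.Composable k (X.comp n u' (rep (X.src u') r u''))
        (X.comp n v (X.ide (X.src v))) := by
      rw [hue]; exact hcomp
    rw [hsrc, hrepc, hwc]
    calc X.comp k (X.comp n u' (rep (X.src u') r u'')) v
        = X.comp k (X.comp n u' (rep (X.src u') r u''))
            (X.comp n v (X.ide (X.src v))) := by rw [hue]
      _ = X.comp n (X.comp k u' v)
            (X.comp k (rep (X.src u') r u'') (X.ide (X.src v))) :=
          hX.exch k n u' (rep (X.src u') r u'') v (X.ide (X.src v)) hk hCuw hC1 hC2
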